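/- Let k be a field of characteristic different from 2 and 3, let π(x,y) = (2y(y−x+2)/(x−y)², y²/(x−y)²) for x ≠ y, and define τ(x,y) = ((2y−x)/(y−x+1), y/(y−x+1)) for y−x+1 ≠ 0. Let (x,y) ∈ k² satisfy x ≠ y and y−x+1 ≠ 0. Then the point (x',y') = τ(x,y) again satisfies x' ≠ y' and y'−x'+1 ≠ 0, and moreover τ(τ(x,y)) = (x,y) and π(τ(x,y)) = π(x,y). That is, τ is an involution interchanging the two sheets of the double cover π. -/

import Mathlib

/-- The Pappus–Steiner map `π(x,y) = (2y(y−x+2)/(x−y)², y²/(x−y)²)`. -/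
def pap {k : Type*} [Field k] (z : k × k) : k × k :=
  (2 * z.2 * (z.2 - z.1 + 2) / (z.1 - z.2) ^ 2, z.2 ^ 2 / (z.1 - z.2) ^ 2)

/-- The involution associated to the Pappus–Steiner map:
`τ(x,y) = ((2y−x)/(y−x+1), y/(y−x+1))`. -/
def tauInv {k : Type*} [Field k] (z : k × k) : k × k :=
  ((2 * z.2 - z.1) / (z.2 - z.1 + 1), z.2 / (z.2 - z.1 + 1))

/-- `τ` is an involution interchanging the two sheets of the double cover `π`. -/
theorem tau_involution {k : Type*} [Field k]
    (hchar2 : ringChar k ≠ 2) (hchar3 : ringChar k ≠ 3)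
    (x y : k) (hxy : x ≠ y) (hH : y - x + 1 ≠ 0) :
    (tauInv (x, y)).1 ≠ (tauInv (x, y)).2 ∧
    (tauInv (x, y)).2 - (tauInv (x, y)).1 + 1 ≠ 0 ∧
    tauInv (tauInv (x, y)) = (x, y) ∧
    pap (tauInv (x, y)) = pap (x, y) := by
  have hyx : y - x ≠ 0 := sub_ne_zero.mpr (Ne.symm hxy)
  have hxy' : x - y ≠ 0 := sub_ne_zero.mpr hxy
  have hkey : (y / (y - x + 1) - (2 * y - x) / (y - x + 1) + 1) = 1 / (y - x + 1) := by
    field_simp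
    ring
  refine ⟨?_, ?_, ?_, ?_⟩
  · simp only [tauInv]
    intro h
    rw [div_eq_div_iff hH hH] at h
    have h2 : 2 * y - x = y := mul_right_cancel₀ hH h
    apply hyx
    linear_combination h2
  · simp only [tauInv]
    rw [hkey]
    exact one_div_ne_zero hH
  · simp only [tauInv]
    rw [Prod.ext_iff]
    constructor <;> · simp only [hkey]; field_simp; try ring
  · simp only [tauInv, pap]
    have hsub : (2 * y - x) / (y - x + 1) - y / (y - x + 1) = (y - x) / (y - x + 1) := by
      field_simp; ring
    rw [Prod.ext_iff]
    constructor
    · simp only [hsub]; field_simp; ring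
    · simp only [hsub]; field_simp
      ring
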